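/- Let x and t be real numbers with 1 - 2tx + t² > 0 and x ≠ t. Then 15·F(t,x)⁴·F^{(1)}(t,x) = 3·F^{(1)}(t,x)/(x-t)⁴ + 3·F^{(2)}(t,x)/(x-t)³ + F^{(3)}(t,x)/(x-t)². -/

import Mathlib

namespace LegendreAuxGenFun

noncomputable def u (x s : ℝ) : ℝ := 1 - 2 * s * x + s ^ 2
noncomputable def f (x s : ℝ) : ℝ := u x s ^ (-(1:ℝ)/2)
noncomputable def g1 (x s : ℝ) : ℝ := (x - s) * u x s ^ (-(3:ℝ)/2)
noncomputable def g2 (x s : ℝ) : ℝ :=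
  -(u x s ^ (-(3:ℝ)/2)) + 3 * (x - s) ^ 2 * u x s ^ (-(5:ℝ)/2)
noncomputable def g3 (x s : ℝ) : ℝ :=
  -9 * (x - s) * u x s ^ (-(5:ℝ)/2) + 15 * (x - s) ^ 3 * u x s ^ (-(7:ℝ)/2)

lemma hasDerivAt_u (x s : ℝ) : HasDerivAt (u x) (-2 * (x - s)) s := by
  have h1 : HasDerivAt (fun s : ℝ => 1 - 2 * s * x + s ^ 2)
      (0 - 2 * 1 * x + ↑2 * s ^ 1) s :=
    ((hasDerivAt_const s (1:ℝ)).sub (((hasDerivAt_id s).const_mul 2).mul_const x)).add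
      (hasDerivAt_pow 2 s)
  exact h1.congr_deriv (by ring)

lemma hasDerivAt_rpow_u {x s : ℝ} (hs : 0 < u x s) (p : ℝ) :
    HasDerivAt (fun y => u x y ^ p) (-2 * (x - s) * p * u x s ^ (p - 1)) s :=
  (hasDerivAt_u x s).rpow_const (Or.inl hs.ne')

lemma hasDerivAt_f {x s : ℝ} (hs : 0 < u x s) : HasDerivAt (f x) (g1 x s) s := by
  have h1 := hasDerivAt_rpow_u hs (-(1:ℝ)/2)
  have e : (-(1:ℝ)/2) - 1 = -(3:ℝ)/2 := by norm_num
  rw [e] at h1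
  exact h1.congr_deriv (by unfold g1; ring)

lemma hasDerivAt_g1 {x s : ℝ} (hs : 0 < u x s) : HasDerivAt (g1 x) (g2 x s) s := by
  have h1 := hasDerivAt_rpow_u hs (-(3:ℝ)/2)
  have e : (-(3:ℝ)/2) - 1 = -(5:ℝ)/2 := by norm_num
  rw [e] at h1
  have h2 : HasDerivAt (fun y : ℝ => x - y) (-1) s := by
    simpa using (hasDerivAt_id s).const_sub x
  have := h2.mul h1
  exact this.congr_deriv (by unfold g2; ring)

lemma hasDerivAt_g2 {x s : ℝ} (hs : 0 < u x s) : HasDerivAt (g2 x) (g3 x s) s := by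
  have h3 := hasDerivAt_rpow_u hs (-(3:ℝ)/2)
  have e3 : (-(3:ℝ)/2) - 1 = -(5:ℝ)/2 := by norm_num
  rw [e3] at h3
  have h5 := hasDerivAt_rpow_u hs (-(5:ℝ)/2)
  have e5 : (-(5:ℝ)/2) - 1 = -(7:ℝ)/2 := by norm_num
  rw [e5] at h5
  have hx2 : HasDerivAt (fun y : ℝ => 3 * (x - y) ^ 2) (3 * (2 * (x - s) * (-1))) s := by
    have h2 : HasDerivAt (fun y : ℝ => x - y) (-1) s := by
      simpa using (hasDerivAt_id s).const_sub x
    simpa using (h2.pow 2).const_mul 3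
  have := (h3.neg).add (hx2.mul h5)
  exact this.congr_deriv (by unfold g3; ring)

end LegendreAuxGenFun

open LegendreAuxGenFun in
/-- For real `x` and `t` with `1 - 2tx + t² > 0` and `x ≠ t`, the function
`F(t,x) = (1 - 2tx + t²)^(-1/2)` satisfies
`15·F⁴·F⁽¹⁾ = 3·F⁽¹⁾/(x-t)⁴ + 3·F⁽²⁾/(x-t)³ + F⁽³⁾/(x-t)²`. -/
theorem legendre_genFun_pow_four_mul_deriv (x t : ℝ) (h : 1 - 2 * t * x + t ^ 2 > 0)
    (hxt : x ≠ t) :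
    15 * ((1 - 2 * t * x + t ^ 2) ^ (-(1 : ℝ) / 2)) ^ 4
        * iteratedDeriv 1 (fun s : ℝ => (1 - 2 * s * x + s ^ 2) ^ (-(1 : ℝ) / 2)) t
      = 3 * iteratedDeriv 1 (fun s : ℝ => (1 - 2 * s * x + s ^ 2) ^ (-(1 : ℝ) / 2)) t / (x - t) ^ 4
        + 3 * iteratedDeriv 2 (fun s : ℝ => (1 - 2 * s * x + s ^ 2) ^ (-(1 : ℝ) / 2)) t / (x - t) ^ 3
        + iteratedDeriv 3 (fun s : ℝ => (1 - 2 * s * x + s ^ 2) ^ (-(1 : ℝ) / 2)) t / (x - t) ^ 2 := by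
  have hfeq : (fun s : ℝ => (1 - 2 * s * x + s ^ 2) ^ (-(1 : ℝ) / 2)) = f x := rfl
  have hut : 0 < u x t := h
  have hS : IsOpen {s : ℝ | 0 < u x s} := by
    have hc : Continuous (u x) := by unfold u; continuity
    exact isOpen_lt continuous_const hc
  have hmem : {s : ℝ | 0 < u x s} ∈ nhds t := hS.mem_nhds hut
  -- first derivative agrees with g1 on the open set
  have hd1 : ∀ s ∈ {s : ℝ | 0 < u x s}, deriv (f x) s = g1 x s := fun s hs =>
    (hasDerivAt_f hs).deriv
  have e1 : deriv (f x) =ᶠ[nhds t] g1 x :=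
    Filter.eventuallyEq_of_mem hmem hd1
  have hd2 : ∀ s ∈ {s : ℝ | 0 < u x s}, deriv (deriv (f x)) s = g2 x s := by
    intro s hs
    have e1s : deriv (f x) =ᶠ[nhds s] g1 x :=
      Filter.eventuallyEq_of_mem (hS.mem_nhds hs) hd1
    rw [e1s.deriv_eq, (hasDerivAt_g1 hs).deriv]
  have e2 : deriv (deriv (f x)) =ᶠ[nhds t] g2 x :=
    Filter.eventuallyEq_of_mem hmem hd2
  have i1 : iteratedDeriv 1 (f x) t = g1 x t := by
    rw [iteratedDeriv_one]; exact hd1 t hut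
  have i2 : iteratedDeriv 2 (f x) t = g2 x t := by
    rw [show (2:ℕ) = 1 + 1 from rfl, iteratedDeriv_succ, iteratedDeriv_one]
    exact hd2 t hut
  have i3 : iteratedDeriv 3 (f x) t = g3 x t := by
    rw [show (3:ℕ) = 2 + 1 from rfl, iteratedDeriv_succ,
      show (2:ℕ) = 1 + 1 from rfl, iteratedDeriv_succ, iteratedDeriv_one]
    rw [e2.deriv_eq, (hasDerivAt_g2 hut).deriv]
  rw [hfeq, i1, i2, i3]
  -- algebra
  have hupos := hut
  have hA3 : u x t ^ (-(3:ℝ)/2) = (u x t ^ (-(1:ℝ)/2)) ^ 3 := by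
    rw [← Real.rpow_natCast (u x t ^ (-(1:ℝ)/2)) 3, ← Real.rpow_mul hupos.le]
    norm_num
  have hA5 : u x t ^ (-(5:ℝ)/2) = (u x t ^ (-(1:ℝ)/2)) ^ 5 := by
    rw [← Real.rpow_natCast (u x t ^ (-(1:ℝ)/2)) 5, ← Real.rpow_mul hupos.le]
    norm_num
  have hA7 : u x t ^ (-(7:ℝ)/2) = (u x t ^ (-(1:ℝ)/2)) ^ 7 := by
    rw [← Real.rpow_natCast (u x t ^ (-(1:ℝ)/2)) 7, ← Real.rpow_mul hupos.le]
    norm_num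
  have hueq : (1 - 2 * t * x + t ^ 2) = u x t := rfl
  rw [hueq]
  unfold g1 g2 g3
  rw [hA3, hA5, hA7]
  have hxt' : x - t ≠ 0 := sub_ne_zero.mpr hxt
  field_simp
  ring
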